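/- Let -1 < θ1 < 0, -1 < θ2 ≤ 0 with θ1 + θ2 = -1, and let 0 ≤ s1 < s2 ≤ T. With p(s,x) = exp(-σ s^{-α/(2-α)} |x|^{2/(2-α)}), there is a constant C such that for all real τ1 ≠ ρ2, ∫_R |ρ1 - τ1|^{θ1} |ρ2 - ρ1|^{θ2} p(s2 - s1, ρ2 - ρ1) dρ1 ≤ C + C |log(ρ2 - τ1)|. -/

import Mathlib

open MeasureTheory Real

open Set in
lemma integrable_comp_abs_of_integrableOn {f : ℝ → ℝ}
    (hf : IntegrableOn f (Set.Ioi (0:ℝ))) : Integrable (fun x => f |x|) := by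
  have hIoi : IntegrableOn (fun x => f |x|) (Ioi (0:ℝ)) :=
    hf.congr_fun (fun x hx => by rw [abs_of_pos hx]) measurableSet_Ioi
  have hIic : IntegrableOn (fun x => f |x|) (Iic (0:ℝ)) := by
    rw [← Measure.map_neg_eq_self (volume : Measure ℝ)]
    have m : MeasurableEmbedding fun x : ℝ => -x := (Homeomorph.neg ℝ).measurableEmbedding
    rw [m.integrableOn_map_iff]
    simp_rw [Function.comp_def, abs_neg, Set.neg_preimage, Set.neg_Iic, neg_zero]
    exact (integrableOn_Ici_iff_integrableOn_Ioi).mpr hIoi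
  have h := hIic.union hIoi
  rwa [Set.Iic_union_Ioi, integrableOn_univ] at h

lemma integrableOn_rpow_Ioc (θ e : ℝ) (hθ : -1 < θ) :
    IntegrableOn (fun t : ℝ => t ^ θ) (Set.Ioc (0:ℝ) e) :=
  (intervalIntegral.intervalIntegrable_rpow' hθ (a := 0) (b := e)).1

lemma integrableOn_inv_Ioc (e : ℝ) (he : 0 < e) :
    IntegrableOn (fun t : ℝ => t⁻¹) (Set.Ioc e (1:ℝ)) := by
  rcases le_or_gt 1 e with h | h
  · rw [Set.Ioc_eq_empty (not_lt.mpr h)]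
    exact integrableOn_empty
  · refine (intervalIntegral.intervalIntegrable_inv (f := fun x : ℝ => x) ?_ continuousOn_id).1
    intro x hx
    have h1 : min e 1 ≤ x := hx.1
    rw [min_eq_left h.le] at h1
    exact ne_of_gt (lt_of_lt_of_le he h1)

lemma integral_abs_indicator_rpow (θ ν e : ℝ) (hθ : -1 < θ) (hθ0 : θ + 1 ≠ 0) (he : 0 < e) :
    (∫ x : ℝ, (Set.Ioc (0:ℝ) e).indicator (fun t => e ^ ν * t ^ θ) |x|)
      = 2 * (e ^ ν * (e ^ (θ + 1) / (θ + 1))) := by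
  rw [integral_comp_abs, setIntegral_indicator measurableSet_Ioc,
    show Set.Ioi (0:ℝ) ∩ Set.Ioc (0:ℝ) e = Set.Ioc (0:ℝ) e from
      Set.inter_eq_self_of_subset_right (fun x hx => hx.1),
    ← intervalIntegral.integral_of_le he.le,
    intervalIntegral.integral_const_mul, integral_rpow (Or.inl hθ),
    Real.zero_rpow hθ0]
  ring

lemma F3_setint (c e : ℝ) (hc : 0 < c) (he : 0 < e) :
    (∫ t in Set.Ioi (0:ℝ), ((Set.Ioc e (1:ℝ)).indicator (fun t : ℝ => t⁻¹) t
        + (Set.Ioi (1:ℝ)).indicator (fun t : ℝ => Real.exp (-c * t)) t))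
      ≤ |Real.log e| + ∫ t in Set.Ioi (1:ℝ), Real.exp (-c * t) := by
  have h1 : IntegrableOn ((Set.Ioc e (1:ℝ)).indicator (fun t : ℝ => t⁻¹)) (Set.Ioi (0:ℝ)) :=
    (((integrableOn_inv_Ioc e he).integrable_indicator measurableSet_Ioc)).integrableOn
  have h2 : IntegrableOn ((Set.Ioi (1:ℝ)).indicator (fun t : ℝ => Real.exp (-c * t)))
      (Set.Ioi (0:ℝ)) :=
    (((exp_neg_integrableOn_Ioi 1 hc).integrable_indicator measurableSet_Ioi)).integrableOn
  rw [integral_add h1 h2]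
  have hpart2 : (∫ t in Set.Ioi (0:ℝ),
      (Set.Ioi (1:ℝ)).indicator (fun t : ℝ => Real.exp (-c * t)) t)
      = ∫ t in Set.Ioi (1:ℝ), Real.exp (-c * t) := by
    rw [setIntegral_indicator measurableSet_Ioi,
      show Set.Ioi (0:ℝ) ∩ Set.Ioi (1:ℝ) = Set.Ioi (1:ℝ) from
        Set.inter_eq_self_of_subset_right (fun x hx => Set.mem_Ioi.mpr (lt_trans one_pos (Set.mem_Ioi.mp hx)))]
  have hpart1 : (∫ t in Set.Ioi (0:ℝ), (Set.Ioc e (1:ℝ)).indicator (fun t : ℝ => t⁻¹) t)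
      ≤ |Real.log e| := by
    rw [setIntegral_indicator measurableSet_Ioc,
      show Set.Ioi (0:ℝ) ∩ Set.Ioc e (1:ℝ) = Set.Ioc e (1:ℝ) from
        Set.inter_eq_self_of_subset_right (fun x hx => lt_trans he hx.1)]
    rcases le_or_gt 1 e with h | h
    · rw [Set.Ioc_eq_empty (not_lt.mpr h), Measure.restrict_empty, integral_zero_measure]
      exact abs_nonneg _
    · rw [← intervalIntegral.integral_of_le h.le, integral_inv (by
        intro hmem
        have h1 : min e 1 ≤ (0:ℝ) := hmem.1
        rw [min_eq_left h.le] at h1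
        linarith)]
      rw [one_div, Real.log_inv]
      exact neg_le_abs _
  rw [hpart2]
  linarith

lemma outer_bound (c β e t : ℝ) (hc : 0 < c) (hβ1 : 1 ≤ β) (he : 0 < e) (ht : e < t) :
    t ^ (-1:ℝ) * Real.exp (-(c * t ^ β)) ≤
      (Set.Ioc e (1:ℝ)).indicator (fun t : ℝ => t⁻¹) t
        + (Set.Ioi (1:ℝ)).indicator (fun t : ℝ => Real.exp (-c * t)) t := by
  have ht0 : 0 < t := lt_trans he ht
  have htβ0 : (0:ℝ) ≤ t ^ β := Real.rpow_nonneg ht0.le _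
  have hexp1 : Real.exp (-(c * t ^ β)) ≤ 1 := by
    rw [Real.exp_le_one_iff]
    nlinarith [mul_nonneg hc.le htβ0]
  have hnn2 : 0 ≤ (Set.Ioi (1:ℝ)).indicator (fun t : ℝ => Real.exp (-c * t)) t :=
    Set.indicator_nonneg (fun s _ => (Real.exp_pos _).le) t
  have hnn1 : 0 ≤ (Set.Ioc e (1:ℝ)).indicator (fun t : ℝ => t⁻¹) t :=
    Set.indicator_nonneg (fun s hs => (inv_nonneg).mpr (lt_trans he hs.1).le) t
  rcases le_or_gt t 1 with h1 | h1
  · rw [Set.indicator_of_mem (Set.mem_Ioc.mpr ⟨ht, h1⟩)]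
    have key : t ^ (-1:ℝ) * Real.exp (-(c * t ^ β)) ≤ t⁻¹ := by
      rw [Real.rpow_neg_one]
      nlinarith [inv_pos.mpr ht0, Real.exp_pos (-(c * t ^ β))]
    linarith
  · rw [Set.indicator_of_mem (Set.mem_Ioi.mpr h1)]
    have htβ : t ≤ t ^ β := by
      calc t = t ^ (1:ℝ) := (Real.rpow_one t).symm
        _ ≤ t ^ β := Real.rpow_le_rpow_of_exponent_le h1.le hβ1
    have h6 : Real.exp (-(c * t ^ β)) ≤ Real.exp (-c * t) := by
      apply Real.exp_le_exp.mpr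
      nlinarith
    have h5 : t ^ (-1:ℝ) ≤ 1 := by
      rw [Real.rpow_neg_one]
      nlinarith [mul_inv_cancel₀ (ne_of_gt ht0), inv_pos.mpr ht0]
    have key : t ^ (-1:ℝ) * Real.exp (-(c * t ^ β)) ≤ Real.exp (-c * t) := by
      calc t ^ (-1:ℝ) * Real.exp (-(c * t ^ β))
          ≤ 1 * Real.exp (-(c * t ^ β)) := mul_le_mul_of_nonneg_right h5 (Real.exp_pos _).le
        _ = Real.exp (-(c * t ^ β)) := one_mul _
        _ ≤ Real.exp (-c * t) := h6
    linarith

lemma pointwise_dom (θ₁ θ₂ c β e a b : ℝ) (hθ₁ : -1 < θ₁) (hθ₁' : θ₁ < 0) (hθ₂' : θ₂ < 0)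
    (hsum : θ₁ + θ₂ = -1) (hc : 0 < c) (hβ1 : 1 ≤ β) (he : 0 < e)
    (ha0 : 0 ≤ a) (hb0 : 0 ≤ b) (htri : 2 * e ≤ a + b) :
    a ^ θ₁ * b ^ θ₂ * Real.exp (-(c * b ^ β)) ≤
      (Set.Ioc (0:ℝ) e).indicator (fun t => e ^ θ₂ * t ^ θ₁) a
      + (Set.Ioc (0:ℝ) e).indicator (fun t => e ^ θ₁ * t ^ θ₂) b
      + ((Set.Ioc e (1:ℝ)).indicator (fun t : ℝ => t⁻¹) b
          + (Set.Ioi (1:ℝ)).indicator (fun t : ℝ => Real.exp (-c * t)) b)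
      + ((Set.Ioc e (1:ℝ)).indicator (fun t : ℝ => t⁻¹) a
          + (Set.Ioi (1:ℝ)).indicator (fun t : ℝ => Real.exp (-c * t)) a) := by
  have hN1 : 0 ≤ (Set.Ioc (0:ℝ) e).indicator (fun t => e ^ θ₂ * t ^ θ₁) a :=
    Set.indicator_nonneg
      (fun s hs => mul_nonneg (Real.rpow_nonneg he.le _) (Real.rpow_nonneg hs.1.le _)) a
  have hN2 : 0 ≤ (Set.Ioc (0:ℝ) e).indicator (fun t => e ^ θ₁ * t ^ θ₂) b :=
    Set.indicator_nonneg
      (fun s hs => mul_nonneg (Real.rpow_nonneg he.le _) (Real.rpow_nonneg hs.1.le _)) b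
  have hN3 : 0 ≤ (Set.Ioc e (1:ℝ)).indicator (fun t : ℝ => t⁻¹) b
      + (Set.Ioi (1:ℝ)).indicator (fun t : ℝ => Real.exp (-c * t)) b :=
    add_nonneg
      (Set.indicator_nonneg (fun s hs => (inv_nonneg).mpr (lt_trans he hs.1).le) b)
      (Set.indicator_nonneg (fun s _ => (Real.exp_pos _).le) b)
  have hN4 : 0 ≤ (Set.Ioc e (1:ℝ)).indicator (fun t : ℝ => t⁻¹) a
      + (Set.Ioi (1:ℝ)).indicator (fun t : ℝ => Real.exp (-c * t)) a :=
    add_nonneg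
      (Set.indicator_nonneg (fun s hs => (inv_nonneg).mpr (lt_trans he hs.1).le) a)
      (Set.indicator_nonneg (fun s _ => (Real.exp_pos _).le) a)
  have hexp1 : ∀ x : ℝ, Real.exp (-(c * b ^ β)) ≤ 1 := by
    intro x
    rw [Real.exp_le_one_iff]
    have : (0:ℝ) ≤ c * b ^ β := mul_nonneg hc.le (Real.rpow_nonneg hb0 _)
    linarith
  rcases eq_or_lt_of_le ha0 with ha | ha
  · have hz : a ^ θ₁ = 0 := by rw [← ha, Real.zero_rpow (ne_of_lt hθ₁')]
    rw [hz, zero_mul, zero_mul]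
    linarith
  rcases eq_or_lt_of_le hb0 with hb | hb
  · have hz : b ^ θ₂ = 0 := by rw [← hb, Real.zero_rpow (ne_of_lt hθ₂')]
    rw [hz, mul_zero, zero_mul]
    linarith
  rcases le_or_gt a e with hae | hae
  · -- small a : use first indicator
    have hbe : e ≤ b := by linarith
    have key : a ^ θ₁ * b ^ θ₂ * Real.exp (-(c * b ^ β)) ≤ e ^ θ₂ * a ^ θ₁ := by
      have hb2 : b ^ θ₂ ≤ e ^ θ₂ := Real.rpow_le_rpow_of_nonpos he hbe hθ₂'.le
      have hanng : (0:ℝ) ≤ a ^ θ₁ := Real.rpow_nonneg ha0 _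
      calc a ^ θ₁ * b ^ θ₂ * Real.exp (-(c * b ^ β))
          ≤ a ^ θ₁ * b ^ θ₂ * 1 :=
            mul_le_mul_of_nonneg_left (hexp1 0)
              (mul_nonneg hanng (Real.rpow_nonneg hb0 _))
        _ = a ^ θ₁ * b ^ θ₂ := mul_one _
        _ ≤ a ^ θ₁ * e ^ θ₂ := mul_le_mul_of_nonneg_left hb2 hanng
        _ = e ^ θ₂ * a ^ θ₁ := mul_comm _ _
    rw [Set.indicator_of_mem (Set.mem_Ioc.mpr ⟨ha, hae⟩)]
    linarith
  rcases le_or_gt b e with hbe | hbe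
  · -- small b : use second indicator
    have hae' : e ≤ a := by linarith
    have key : a ^ θ₁ * b ^ θ₂ * Real.exp (-(c * b ^ β)) ≤ e ^ θ₁ * b ^ θ₂ := by
      have ha2 : a ^ θ₁ ≤ e ^ θ₁ := Real.rpow_le_rpow_of_nonpos he hae' hθ₁'.le
      have hbnng : (0:ℝ) ≤ b ^ θ₂ := Real.rpow_nonneg hb0 _
      calc a ^ θ₁ * b ^ θ₂ * Real.exp (-(c * b ^ β))
          ≤ a ^ θ₁ * b ^ θ₂ * 1 :=
            mul_le_mul_of_nonneg_left (hexp1 0)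
              (mul_nonneg (Real.rpow_nonneg ha0 _) hbnng)
        _ = a ^ θ₁ * b ^ θ₂ := mul_one _
        _ ≤ e ^ θ₁ * b ^ θ₂ := mul_le_mul_of_nonneg_right ha2 hbnng
    rw [Set.indicator_of_mem (Set.mem_Ioc.mpr ⟨hb, hbe⟩)]
    linarith
  · -- both large
    rcases le_total b a with hba | hab
    · -- b ≤ a
      have hstep : a ^ θ₁ * b ^ θ₂ * Real.exp (-(c * b ^ β))
          ≤ b ^ (-1:ℝ) * Real.exp (-(c * b ^ β)) := by
        have h1 : a ^ θ₁ ≤ b ^ θ₁ := Real.rpow_le_rpow_of_nonpos hb hba hθ₁'.le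
        have h3 : b ^ θ₁ * b ^ θ₂ = b ^ (-1:ℝ) := by
          rw [← Real.rpow_add hb, hsum]
        calc a ^ θ₁ * b ^ θ₂ * Real.exp (-(c * b ^ β))
            ≤ b ^ θ₁ * b ^ θ₂ * Real.exp (-(c * b ^ β)) :=
              mul_le_mul_of_nonneg_right
                (mul_le_mul_of_nonneg_right h1 (Real.rpow_nonneg hb0 _))
                (Real.exp_pos _).le
          _ = b ^ (-1:ℝ) * Real.exp (-(c * b ^ β)) := by rw [h3]
      have := outer_bound c β e b hc hβ1 he hbe
      linarith
    · -- a ≤ b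
      have hstep : a ^ θ₁ * b ^ θ₂ * Real.exp (-(c * b ^ β))
          ≤ a ^ (-1:ℝ) * Real.exp (-(c * a ^ β)) := by
        have h1 : b ^ θ₂ ≤ a ^ θ₂ := Real.rpow_le_rpow_of_nonpos ha hab hθ₂'.le
        have h3 : a ^ θ₁ * a ^ θ₂ = a ^ (-1:ℝ) := by
          rw [← Real.rpow_add ha, hsum]
        have h6 : Real.exp (-(c * b ^ β)) ≤ Real.exp (-(c * a ^ β)) := by
          apply Real.exp_le_exp.mpr
          have hb' : a ^ β ≤ b ^ β := Real.rpow_le_rpow ha0 hab (by linarith)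
          nlinarith
        calc a ^ θ₁ * b ^ θ₂ * Real.exp (-(c * b ^ β))
            ≤ a ^ θ₁ * a ^ θ₂ * Real.exp (-(c * b ^ β)) :=
              mul_le_mul_of_nonneg_right
                (mul_le_mul_of_nonneg_left h1 (Real.rpow_nonneg ha0 _))
                (Real.exp_pos _).le
          _ = a ^ (-1:ℝ) * Real.exp (-(c * b ^ β)) := by rw [h3]
          _ ≤ a ^ (-1:ℝ) * Real.exp (-(c * a ^ β)) :=
              mul_le_mul_of_nonneg_left h6 (Real.rpow_nonneg ha0 _)
      have := outer_bound c β e a hc hβ1 he hae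
      linarith

set_option maxHeartbeats 1000000 in
theorem integral_kernel_critical (α σ T θ₁ θ₂ : ℝ) (hα : 0 < α) (hα1 : α < 1)
    (hσ : 0 < σ) (hT : 0 < T)
    (hθ₁ : -1 < θ₁) (hθ₁' : θ₁ < 0) (hθ₂ : -1 < θ₂) (hθ₂' : θ₂ ≤ 0)
    (hsum : θ₁ + θ₂ = -1)
    (s₁ s₂ : ℝ) (hs₁ : 0 ≤ s₁) (hs : s₁ < s₂) (hs₂ : s₂ ≤ T) :
    ∃ C : ℝ, 0 < C ∧ ∀ τ₁ ρ₂ : ℝ, τ₁ ≠ ρ₂ →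
      (∫ ρ₁ : ℝ, |ρ₁ - τ₁| ^ θ₁ * |ρ₂ - ρ₁| ^ θ₂ *
          Real.exp (-σ * (s₂ - s₁) ^ (-(α / (2 - α))) * |ρ₂ - ρ₁| ^ (2 / (2 - α))))
        ≤ C + C * |Real.log (ρ₂ - τ₁)| := by
  have h2α : (0:ℝ) < 2 - α := by linarith
  set β : ℝ := 2 / (2 - α) with hβdef
  have hβ1 : 1 ≤ β := by rw [hβdef, le_div_iff₀ h2α]; linarith
  set c : ℝ := σ * (s₂ - s₁) ^ (-(α / (2 - α))) with hcdef
  have hc : 0 < c := mul_pos hσ (Real.rpow_pos_of_pos (by linarith) _)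
  have hθ₂neg : θ₂ < 0 := by linarith
  have h1θ₁ : (0:ℝ) < θ₁ + 1 := by linarith
  have h1θ₂ : (0:ℝ) < θ₂ + 1 := by linarith
  have hKint : IntegrableOn (fun x : ℝ => Real.exp (-c * x)) (Set.Ioi (1:ℝ)) :=
    exp_neg_integrableOn_Ioi 1 hc
  set K : ℝ := ∫ t in Set.Ioi (1:ℝ), Real.exp (-c * t) with hKdef
  have hK0 : 0 ≤ K :=
    setIntegral_nonneg measurableSet_Ioi (fun t _ => (Real.exp_pos _).le)
  have hlog2 : (0:ℝ) < Real.log 2 := Real.log_pos (by norm_num)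
  refine ⟨2 / (θ₁ + 1) + 2 / (θ₂ + 1) + 4 * K + 4 * Real.log 2 + 4, ?_, ?_⟩
  · have hA : (0:ℝ) < 2 / (θ₁ + 1) := by positivity
    have hB : (0:ℝ) < 2 / (θ₂ + 1) := by positivity
    linarith
  intro τ₁ ρ₂ hne
  set D : ℝ := ρ₂ - τ₁ with hDdef
  have hD : D ≠ 0 := sub_ne_zero.mpr (Ne.symm hne)
  set d : ℝ := |D| with hddef
  have hd : 0 < d := abs_pos.mpr hD
  set e : ℝ := d / 2 with hedef
  have he : 0 < e := by positivity
  set F₁ : ℝ → ℝ := (Set.Ioc (0:ℝ) e).indicator (fun t => e ^ θ₂ * t ^ θ₁) with hF₁def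
  set F₂ : ℝ → ℝ := (Set.Ioc (0:ℝ) e).indicator (fun t => e ^ θ₁ * t ^ θ₂) with hF₂def
  set F₃ : ℝ → ℝ := fun t => (Set.Ioc e (1:ℝ)).indicator (fun t : ℝ => t⁻¹) t
      + (Set.Ioi (1:ℝ)).indicator (fun t : ℝ => Real.exp (-c * t)) t with hF₃def
  -- integrability
  have hF₁int : Integrable F₁ :=
    IntegrableOn.integrable_indicator ((integrableOn_rpow_Ioc θ₁ e hθ₁).const_mul _)
      measurableSet_Ioc
  have hF₂int : Integrable F₂ :=
    IntegrableOn.integrable_indicator ((integrableOn_rpow_Ioc θ₂ e hθ₂).const_mul _)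
      measurableSet_Ioc
  have hF₃int : Integrable F₃ :=
    ((integrableOn_inv_Ioc e he).integrable_indicator measurableSet_Ioc).add
      (hKint.integrable_indicator measurableSet_Ioi)
  have hΦ₁ : Integrable (fun x : ℝ => F₁ |x|) :=
    integrable_comp_abs_of_integrableOn hF₁int.integrableOn
  have hΦ₂ : Integrable (fun x : ℝ => F₂ |x|) :=
    integrable_comp_abs_of_integrableOn hF₂int.integrableOn
  have hΦ₃ : Integrable (fun x : ℝ => F₃ |x|) :=
    integrable_comp_abs_of_integrableOn hF₃int.integrableOn
  have h1i : Integrable (fun ρ₁ : ℝ => F₁ |ρ₁ - τ₁|) := hΦ₁.comp_sub_right τ₁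
  have h2i : Integrable (fun ρ₁ : ℝ => F₂ |ρ₂ - ρ₁|) := hΦ₂.comp_sub_left ρ₂
  have h3i : Integrable (fun ρ₁ : ℝ => F₃ |ρ₂ - ρ₁|) := hΦ₃.comp_sub_left ρ₂
  have h4i : Integrable (fun ρ₁ : ℝ => F₃ |ρ₁ - τ₁|) := hΦ₃.comp_sub_right τ₁
  set G : ℝ → ℝ := fun ρ₁ => F₁ |ρ₁ - τ₁| + F₂ |ρ₂ - ρ₁| + F₃ |ρ₂ - ρ₁| + F₃ |ρ₁ - τ₁|
    with hGdef
  have hGint : Integrable G := ((h1i.add h2i).add h3i).add h4i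
  -- pointwise bound
  have hptwise : ∀ ρ₁ : ℝ, |ρ₁ - τ₁| ^ θ₁ * |ρ₂ - ρ₁| ^ θ₂ *
      Real.exp (-σ * (s₂ - s₁) ^ (-(α / (2 - α))) * |ρ₂ - ρ₁| ^ β) ≤ G ρ₁ := by
    intro ρ₁
    have harg : -σ * (s₂ - s₁) ^ (-(α / (2 - α))) * |ρ₂ - ρ₁| ^ β
        = -(c * |ρ₂ - ρ₁| ^ β) := by rw [hcdef]; ring
    rw [harg]
    have htri : 2 * e ≤ |ρ₁ - τ₁| + |ρ₂ - ρ₁| := by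
      have h2e : 2 * e = d := by rw [hedef]; ring
      have : |D| ≤ |ρ₁ - τ₁| + |ρ₂ - ρ₁| := by
        calc |D| = |(ρ₁ - τ₁) + (ρ₂ - ρ₁)| := by rw [hDdef]; ring_nf
          _ ≤ |ρ₁ - τ₁| + |ρ₂ - ρ₁| := abs_add_le _ _
      rw [h2e, hddef]
      exact this
    have := pointwise_dom θ₁ θ₂ c β e (|ρ₁ - τ₁|) (|ρ₂ - ρ₁|) hθ₁ hθ₁' hθ₂neg hsum hc hβ1 he
      (abs_nonneg _) (abs_nonneg _) htri
    calc |ρ₁ - τ₁| ^ θ₁ * |ρ₂ - ρ₁| ^ θ₂ * Real.exp (-(c * |ρ₂ - ρ₁| ^ β))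
        ≤ _ := this
      _ = G ρ₁ := by rw [hGdef]
  have hmain : (∫ ρ₁ : ℝ, |ρ₁ - τ₁| ^ θ₁ * |ρ₂ - ρ₁| ^ θ₂ *
      Real.exp (-σ * (s₂ - s₁) ^ (-(α / (2 - α))) * |ρ₂ - ρ₁| ^ β)) ≤ ∫ ρ₁, G ρ₁ := by
    apply integral_mono_of_nonneg ?_ hGint (Filter.Eventually.of_forall hptwise)
    apply Filter.Eventually.of_forall
    intro ρ₁
    have h1 : (0:ℝ) ≤ |ρ₁ - τ₁| ^ θ₁ := Real.rpow_nonneg (abs_nonneg _) _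
    have h2 : (0:ℝ) ≤ |ρ₂ - ρ₁| ^ θ₂ := Real.rpow_nonneg (abs_nonneg _) _
    have h3 := (Real.exp_pos (-σ * (s₂ - s₁) ^ (-(α / (2 - α))) * |ρ₂ - ρ₁| ^ β)).le
    exact mul_nonneg (mul_nonneg h1 h2) h3
  -- split the dominating integral
  have hsplit : (∫ ρ₁, G ρ₁) = (∫ ρ₁ : ℝ, F₁ |ρ₁ - τ₁|) + (∫ ρ₁ : ℝ, F₂ |ρ₂ - ρ₁|)
      + (∫ ρ₁ : ℝ, F₃ |ρ₂ - ρ₁|) + (∫ ρ₁ : ℝ, F₃ |ρ₁ - τ₁|) := by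
    have h12 : Integrable (fun ρ₁ : ℝ => F₁ |ρ₁ - τ₁| + F₂ |ρ₂ - ρ₁|) := h1i.add h2i
    have h123 : Integrable (fun ρ₁ : ℝ => F₁ |ρ₁ - τ₁| + F₂ |ρ₂ - ρ₁| + F₃ |ρ₂ - ρ₁|) :=
      h12.add h3i
    simp only [hGdef]
    rw [integral_add h123 h4i, integral_add h12 h3i, integral_add h1i h2i]
  have ht1 : (∫ ρ₁ : ℝ, F₁ |ρ₁ - τ₁|) = 2 / (θ₁ + 1) := by
    rw [integral_sub_right_eq_self (μ := volume) (fun y : ℝ => F₁ |y|) τ₁]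
    simp only [hF₁def]
    rw [integral_abs_indicator_rpow θ₁ θ₂ e hθ₁ (ne_of_gt h1θ₁) he]
    rw [show e ^ θ₂ * (e ^ (θ₁ + 1) / (θ₁ + 1)) = e ^ θ₂ * e ^ (θ₁ + 1) / (θ₁ + 1) by ring,
      ← Real.rpow_add he, show θ₂ + (θ₁ + 1) = 0 by linarith, Real.rpow_zero]
    ring
  have ht2 : (∫ ρ₁ : ℝ, F₂ |ρ₂ - ρ₁|) = 2 / (θ₂ + 1) := by
    rw [integral_sub_left_eq_self (fun y : ℝ => F₂ |y|) volume ρ₂]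
    simp only [hF₂def]
    rw [integral_abs_indicator_rpow θ₂ θ₁ e hθ₂ (ne_of_gt h1θ₂) he]
    rw [show e ^ θ₁ * (e ^ (θ₂ + 1) / (θ₂ + 1)) = e ^ θ₁ * e ^ (θ₂ + 1) / (θ₂ + 1) by ring,
      ← Real.rpow_add he, show θ₁ + (θ₂ + 1) = 0 by linarith, Real.rpow_zero]
    ring
  have hedout : (∫ x : ℝ, F₃ |x|) ≤ 2 * (|Real.log e| + K) := by
    rw [integral_comp_abs (f := F₃)]
    have h := F3_setint c e hc he
    have h' : (∫ t in Set.Ioi (0:ℝ), F₃ t) ≤ |Real.log e| + K := by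
      simp only [hF₃def]
      exact h
    linarith
  have ht3 : (∫ ρ₁ : ℝ, F₃ |ρ₂ - ρ₁|) ≤ 2 * (|Real.log e| + K) := by
    rw [integral_sub_left_eq_self (fun y : ℝ => F₃ |y|) volume ρ₂]
    exact hedout
  have ht4 : (∫ ρ₁ : ℝ, F₃ |ρ₁ - τ₁|) ≤ 2 * (|Real.log e| + K) := by
    rw [integral_sub_right_eq_self (μ := volume) (fun y : ℝ => F₃ |y|) τ₁]
    exact hedout
  have hloge : |Real.log e| ≤ |Real.log d| + Real.log 2 := by
    rw [hedef, Real.log_div (ne_of_gt hd) (by norm_num)]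
    calc |Real.log d - Real.log 2| ≤ |Real.log d| + |Real.log 2| := abs_sub _ _
      _ = |Real.log d| + Real.log 2 := by rw [abs_of_pos hlog2]
  have hlogD : |Real.log D| = |Real.log d| := by
    rw [hddef, Real.log_abs]
  have habs : 0 ≤ |Real.log d| := abs_nonneg _
  rw [hlogD]
  calc (∫ ρ₁ : ℝ, |ρ₁ - τ₁| ^ θ₁ * |ρ₂ - ρ₁| ^ θ₂ *
          Real.exp (-σ * (s₂ - s₁) ^ (-(α / (2 - α))) * |ρ₂ - ρ₁| ^ β))
      ≤ ∫ ρ₁, G ρ₁ := hmain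
    _ = (∫ ρ₁ : ℝ, F₁ |ρ₁ - τ₁|) + (∫ ρ₁ : ℝ, F₂ |ρ₂ - ρ₁|)
        + (∫ ρ₁ : ℝ, F₃ |ρ₂ - ρ₁|) + (∫ ρ₁ : ℝ, F₃ |ρ₁ - τ₁|) := hsplit
    _ ≤ 2 / (θ₁ + 1) + 2 / (θ₂ + 1) + 2 * (|Real.log e| + K) + 2 * (|Real.log e| + K) := by
        rw [ht1, ht2]
        linarith
    _ ≤ (2 / (θ₁ + 1) + 2 / (θ₂ + 1) + 4 * K + 4 * Real.log 2 + 4)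
        + (2 / (θ₁ + 1) + 2 / (θ₂ + 1) + 4 * K + 4 * Real.log 2 + 4) * |Real.log d| := by
        have hA : (0:ℝ) < 2 / (θ₁ + 1) := by positivity
        have hB : (0:ℝ) < 2 / (θ₂ + 1) := by positivity
        nlinarith
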